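/- Let z ∈ ℝ^d with ‖z‖₂ = 1 and r ∈ ℝ^d. Then inf over y in the closed Euclidean unit ball of ( −⟨y, z⟩ + ‖(r + z) − y‖₂ ) is at least min{1, ‖r‖₂²}/8 − 1. -/
import Mathlib


open RealInnerProductSpace

lemma ext_linear_loss_aux (R U S : ℝ) (hR : 0 ≤ R) (hS : 0 ≤ S)
    (h : R - S ≤ U) : min 1 (R ^ 2) / 8 ≤ U ^ 2 / 2 + S := by
  rcases le_total 1 (R ^ 2) with h1 | h1
  · rw [min_eq_left h1]
    rcases le_total S (1 / 8) with h2 | h2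
    · have hR1 : 1 ≤ R := by nlinarith
      nlinarith [sq_nonneg (U - 7 / 8)]
    · nlinarith [sq_nonneg U]
  · rw [min_eq_right h1]
    rcases le_total S (R ^ 2 / 8) with h2 | h2
    · have hR1 : R ≤ 1 := by nlinarith
      have hSR : S ≤ R / 8 := by nlinarith
      nlinarith [sq_nonneg (U - 7 * R / 8)]
    · nlinarith [sq_nonneg U]

/-- For `‖z‖ = 1` and any `r`,
`inf_{‖y‖ ≤ 1} (−⟨y, z⟩ + ‖(r + z) − y‖) ≥ min {1, ‖r‖²}/8 − 1`. -/
theorem ext_linear_loss_quadratic_growth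
    (d : ℕ) (z r : EuclideanSpace ℝ (Fin d)) (hz : ‖z‖ = 1) :
    min 1 (‖r‖ ^ 2) / 8 - 1 ≤
      sInf ((fun y => -⟪y, z⟫ + ‖(r + z) - y‖) ''
        (Metric.closedBall (0 : EuclideanSpace ℝ (Fin d)) 1)) := by
  apply le_csInf
  · exact ⟨_, ⟨0, Metric.mem_closedBall_self zero_le_one, rfl⟩⟩
  · rintro b ⟨y, hy, rfl⟩
    have hy1 : ‖y‖ ≤ 1 := by simpa using hy
    -- key inner product bound
    have hkey : ‖y - z‖ ^ 2 / 2 - 1 ≤ -⟪y, z⟫ := by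
      have hexp : ‖y - z‖ ^ 2 = ‖y‖ ^ 2 - 2 * ⟪y, z⟫ + ‖z‖ ^ 2 := by
        rw [norm_sub_sq_real]
      have : ‖y‖ ^ 2 ≤ 1 := by nlinarith [norm_nonneg y]
      rw [hexp, hz]; nlinarith
    have hrw : (r + z) - y = r - (y - z) := by abel
    have htri : ‖r‖ - ‖r - (y - z)‖ ≤ ‖y - z‖ := by
      have h1 := norm_sub_norm_le r (r - (y - z))
      have h2 : r - (r - (y - z)) = y - z := by abel
      rwa [h2] at h1
    have haux := ext_linear_loss_aux ‖r‖ ‖y - z‖ ‖r - (y - z)‖ (norm_nonneg _)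
      (norm_nonneg _) htri
    simp only [hrw]
    linarith
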